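/- Let Q be a finite-dimensional real vector space, Δ° ⊆ Q* a linear subspace annihilating a subspace Δ ⊆ Q, H : Q × Q* → ℝ a C¹ Hamiltonian, and (q,p) : [0,T] → Q × Q* a C¹ curve with q̇(t) ∈ Δ for all t, q(0) = q₀. Suppose the action S[q,p] = ∫₀ᵀ(⟨p, q̇⟩ − H(q,p)) dt is stationary for all C¹ variations (δq, δp) with δq(t) ∈ Δ for all t and δq(0) = 0 (and δq(T) ∈ Δ unrestricted otherwise). Then q̇(t) = D_p H(q(t),p(t)) ∈ Δ, ṗ(t) + D_q H(q(t),p(t)) ∈ Δ° for all t ∈ (0,T), and the natural boundary condition p(T) ∈ Δ° holds. -/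

import Mathlib

open Set MeasureTheory Metric

/-- The annihilator `Δ° = {α : ⟨α, v⟩ = 0 for all v ∈ Δ}` of a subspace `Δ ⊆ ℝⁿ`,
identifying the dual with `ℝⁿ` via the dot pairing. -/
def annihilatorOf (n : ℕ) (Δ : Submodule ℝ (Fin n → ℝ)) : Set (Fin n → ℝ) :=
  {α | ∀ v ∈ Δ, (∑ i, α i * v i) = 0}

/-- Differentiation under the interval integral, continuous-family version. -/
lemma deriv_param_integral {T : ℝ} {F F' : ℝ → ℝ → ℝ}
    (hF : Continuous fun z : ℝ × ℝ => F z.1 z.2)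
    (hF' : Continuous fun z : ℝ × ℝ => F' z.1 z.2)
    (hd : ∀ ε t, HasDerivAt (fun e => F e t) (F' ε t) ε) :
    HasDerivAt (fun ε => ∫ t in (0:ℝ)..T, F ε t) (∫ t in (0:ℝ)..T, F' 0 t) 0 := by
  obtain ⟨C, hC⟩ := ((isCompact_closedBall (0:ℝ) 1).prod isCompact_uIcc).exists_bound_of_continuousOn
    (hF'.continuousOn (s := closedBall (0:ℝ) 1 ×ˢ uIcc (0:ℝ) T))
  have key := intervalIntegral.hasDerivAt_integral_of_dominated_loc_of_deriv_le
    (F := F) (F' := F') (x₀ := (0:ℝ)) (a := 0) (b := T) (bound := fun _ => C)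
    (μ := volume) (s := ball (0:ℝ) 1) (ball_mem_nhds 0 one_pos)
    (Filter.Eventually.of_forall fun x =>
      ((hF.comp (Continuous.prodMk_right x)).aestronglyMeasurable).restrict)
    ((hF.comp (Continuous.prodMk_right 0)).intervalIntegrable 0 T)
    ((hF'.comp (Continuous.prodMk_right 0)).aestronglyMeasurable).restrict
    (Filter.Eventually.of_forall fun t ht x hx => hC (x, t)
      ⟨ball_subset_closedBall hx, uIoc_subset_uIcc ht⟩)
    (intervalIntegrable_const)
    (Filter.Eventually.of_forall fun t _ x _ => hd x t)
  exact key.2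

/-- Fundamental lemma of the calculus of variations on `(0,T)`. -/
lemma fund_lemma {T : ℝ} (hT : 0 < T) {h : ℝ → ℝ} (hh : Continuous h)
    (hyp : ∀ φ : ℝ → ℝ, ContDiff ℝ 1 φ → φ 0 = 0 → φ T = 0 →
      ∫ t in (0:ℝ)..T, φ t * h t = 0) :
    ∀ t ∈ Ioo (0:ℝ) T, h t = 0 := by
  intro t₀ ht₀
  by_contra hne
  obtain ⟨δ, hδpos, hδ⟩ : ∃ δ > 0, ∀ s ∈ ball t₀ δ, |h s - h t₀| < |h t₀| := by
    have habs : Continuous fun s => |h s - h t₀| := (hh.sub continuous_const).abs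
    exact Metric.eventually_nhds_iff_ball.1
      ((habs.tendsto t₀).eventually_lt_const (by simpa using abs_pos.2 hne))
  set δ' := min δ (min t₀ (T - t₀)) with hδ'def
  have hδ'pos : 0 < δ' := by
    simp only [hδ'def, lt_min_iff]
    exact ⟨hδpos, ht₀.1, by linarith [ht₀.2]⟩
  have hδ'le1 : δ' ≤ t₀ := le_trans (min_le_right _ _) (min_le_left _ _)
  have hδ'le2 : δ' ≤ T - t₀ := le_trans (min_le_right _ _) (min_le_right _ _)
  set b : ContDiffBump t₀ := ⟨δ'/2, δ', by positivity, by linarith⟩ with hb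
  have hsign : ∀ s ∈ ball t₀ δ', 0 < h t₀ * h s := by
    intro s hs
    have h1 := abs_lt.1 (hδ s (ball_subset_ball (min_le_left _ _) hs))
    rcases lt_or_gt_of_ne hne with hneg | hpos
    · rw [abs_of_neg hneg] at h1
      exact mul_pos_of_neg_of_neg hneg (by linarith [h1.2])
    · rw [abs_of_pos hpos] at h1
      exact mul_pos hpos (by linarith [h1.1])
  have hsupp : ∀ s, s ∉ ball t₀ δ' → b s = 0 := by
    intro s hs
    by_contra h0
    exact hs (b.support_eq ▸ Function.mem_support.2 h0 : s ∈ ball t₀ b.rOut)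
  have hnonneg : ∀ s, 0 ≤ h t₀ * b s * h s := by
    intro s
    by_cases hs : s ∈ ball t₀ δ'
    · have := hsign s hs
      have := b.nonneg (x := s)
      nlinarith
    · rw [hsupp s hs]; ring_nf; simp
  have hpos_in : ∀ s ∈ Ioo (t₀ - δ'/2) (t₀ + δ'/2), 0 < h t₀ * b s * h s := by
    intro s hs
    have hball : s ∈ ball t₀ δ' := by
      simp only [mem_ball, Real.dist_eq] at *
      rw [abs_lt]; constructor <;> [linarith [hs.1]; linarith [hs.2]]
    have h1 : b s = 1 := b.one_of_mem_closedBall (by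
      simp only [mem_closedBall, Real.dist_eq]
      rw [abs_le]; constructor <;> [linarith [hs.1, (show b.rIn = δ'/2 from rfl)]; linarith [hs.2, (show b.rIn = δ'/2 from rfl)]])
    rw [h1, mul_one]
    exact hsign s hball
  have hφ0 : h t₀ * b 0 = 0 := by
    rw [hsupp 0 (by simp only [mem_ball, Real.dist_eq]; rw [abs_of_nonpos (by linarith)]; push_neg; linarith), mul_zero]
  have hφT : h t₀ * b T = 0 := by
    rw [hsupp T (by simp only [mem_ball, Real.dist_eq]; rw [abs_of_nonneg (by linarith)]; push_neg; linarith), mul_zero]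
  have hint := hyp (fun s => h t₀ * b s) (contDiff_const.mul (b.contDiff (n := 1))) hφ0 hφT
  have hcont : Continuous fun s => h t₀ * b s * h s :=
    ((continuous_const.mul b.continuous).mul hh)
  have hii : ∀ u v : ℝ, IntervalIntegrable (fun s => h t₀ * b s * h s) volume u v :=
    fun u v => hcont.intervalIntegrable u v
  have ha : (0:ℝ) ≤ t₀ - δ'/2 := by linarith
  have hbb : t₀ + δ'/2 ≤ T := by linarith
  have hmid : 0 < ∫ s in (t₀ - δ'/2)..(t₀ + δ'/2), h t₀ * b s * h s :=
    intervalIntegral.intervalIntegral_pos_of_pos_on (hii _ _) hpos_in (by linarith)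
  have hleft : 0 ≤ ∫ s in (0:ℝ)..(t₀ - δ'/2), h t₀ * b s * h s :=
    intervalIntegral.integral_nonneg ha (fun u _ => hnonneg u)
  have hright : 0 ≤ ∫ s in (t₀ + δ'/2)..T, h t₀ * b s * h s :=
    intervalIntegral.integral_nonneg hbb (fun u _ => hnonneg u)
  have hsplit : ∫ s in (0:ℝ)..T, h t₀ * b s * h s
      = (∫ s in (0:ℝ)..(t₀ - δ'/2), h t₀ * b s * h s)
        + ((∫ s in (t₀ - δ'/2)..(t₀ + δ'/2), h t₀ * b s * h s)
          + ∫ s in (t₀ + δ'/2)..T, h t₀ * b s * h s) := by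
    rw [intervalIntegral.integral_add_adjacent_intervals (hii (t₀ - δ'/2) (t₀ + δ'/2))
      (hii (t₀ + δ'/2) T),
      intervalIntegral.integral_add_adjacent_intervals (hii 0 (t₀ - δ'/2))
      ((hii (t₀ - δ'/2) (t₀ + δ'/2)).trans (hii (t₀ + δ'/2) T))]
  have : (0:ℝ) < ∫ s in (0:ℝ)..T, h t₀ * b s * h s := by
    rw [hsplit]; linarith
  rw [show (fun s => h t₀ * b s * h s) = fun s => (fun u => h t₀ * b u) s * h s from rfl] at this
  rw [hint] at this
  exact lt_irrefl 0 this

section helpers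
variable {n : ℕ}

lemma partial_p {H : (Fin n → ℝ) → (Fin n → ℝ) → ℝ}
    (hH : ContDiff ℝ 1 (fun x : (Fin n → ℝ) × (Fin n → ℝ) => H x.1 x.2))
    (a b v : Fin n → ℝ) :
    fderiv ℝ (fun p' => H a p') b v
      = fderiv ℝ (fun x : (Fin n → ℝ) × (Fin n → ℝ) => H x.1 x.2) (a, b) (0, v) := by
  have h1 : HasFDerivAt (fun p' => H a p')
      ((fderiv ℝ (fun x : (Fin n → ℝ) × (Fin n → ℝ) => H x.1 x.2) (a, b)).comp
        (ContinuousLinearMap.inr ℝ _ _)) b :=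
    ((hH.differentiable one_ne_zero (a, b)).hasFDerivAt).comp b (hasFDerivAt_prodMk_right a b)
  rw [h1.fderiv]
  simp

lemma partial_q {H : (Fin n → ℝ) → (Fin n → ℝ) → ℝ}
    (hH : ContDiff ℝ 1 (fun x : (Fin n → ℝ) × (Fin n → ℝ) => H x.1 x.2))
    (a b v : Fin n → ℝ) :
    fderiv ℝ (fun q' => H q' b) a v
      = fderiv ℝ (fun x : (Fin n → ℝ) × (Fin n → ℝ) => H x.1 x.2) (a, b) (v, 0) := by
  have h1 : HasFDerivAt (fun q' => H q' b)
      ((fderiv ℝ (fun x : (Fin n → ℝ) × (Fin n → ℝ) => H x.1 x.2) (a, b)).comp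
        (ContinuousLinearMap.inl ℝ _ _)) a :=
    by have := ((hH.differentiable one_ne_zero (a, b)).hasFDerivAt).comp a (hasFDerivAt_prodMk_left (𝕜 := ℝ) a b); exact this
  rw [h1.fderiv]
  simp

lemma sum_single_decomp (v : Fin n → ℝ) :
    ∑ i, v i • (Pi.single i 1 : Fin n → ℝ) = v := by
  funext j
  simp [Pi.single_apply, Finset.sum_ite_eq, mul_ite]

lemma clm_sum_single (L : ((Fin n → ℝ) × (Fin n → ℝ)) →L[ℝ] ℝ) (v : Fin n → ℝ) :
    ∑ i, L (Pi.single i 1, 0) * v i = L (v, 0) := by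
  have h : ((v, (0:Fin n → ℝ)) : (Fin n → ℝ) × (Fin n → ℝ))
      = ∑ i, v i • ((Pi.single i 1 : Fin n → ℝ), (0:Fin n → ℝ)) := by
    rw [Prod.ext_iff]
    constructor
    · rw [Prod.fst_sum]
      simpa using (sum_single_decomp v).symm
    · rw [Prod.snd_sum]
      simp
  rw [h, map_sum]
  refine Finset.sum_congr rfl fun i _ => ?_
  rw [_root_.map_smul, smul_eq_mul, mul_comm]

lemma master_identity {T : ℝ}
    (H : (Fin n → ℝ) → (Fin n → ℝ) → ℝ)
    (hH : ContDiff ℝ 1 (fun x : (Fin n → ℝ) × (Fin n → ℝ) => H x.1 x.2))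
    (q p : ℝ → (Fin n → ℝ)) (hq : ContDiff ℝ 1 q) (hp : ContDiff ℝ 1 p)
    (δq δp : ℝ → (Fin n → ℝ)) (hδq : ContDiff ℝ 1 δq) (hδp : ContDiff ℝ 1 δp)
    (hstat1 : deriv (fun ε : ℝ =>
        ∫ t in (0 : ℝ)..T,
          ((∑ i, (p t + ε • δp t) i * deriv (fun s => q s + ε • δq s) t i)
            - H (q t + ε • δq t) (p t + ε • δp t))) 0 = 0) :
    ∫ t in (0:ℝ)..T, ((∑ i, δp t i * deriv q t i) + (∑ i, p t i * deriv δq t i)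
      - fderiv ℝ (fun x : (Fin n → ℝ) × (Fin n → ℝ) => H x.1 x.2) (q t, p t) (δq t, δp t))
      = 0 := by
  set G : (Fin n → ℝ) × (Fin n → ℝ) → ℝ := fun x => H x.1 x.2 with hGdef
  set F : ℝ → ℝ → ℝ := fun ε t =>
    (∑ i, (p t + ε • δp t) i * (deriv q t + ε • deriv δq t) i)
      - H (q t + ε • δq t) (p t + ε • δp t) with hFdef
  set F' : ℝ → ℝ → ℝ := fun ε t =>
    ((∑ i, δp t i * (deriv q t + ε • deriv δq t) i)
      + ∑ i, (p t + ε • δp t) i * deriv δq t i)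
      - fderiv ℝ G (q t + ε • δq t, p t + ε • δp t) (δq t, δp t) with hF'def
  have cq : Continuous q := hq.continuous
  have cp : Continuous p := hp.continuous
  have cδq : Continuous δq := hδq.continuous
  have cδp : Continuous δp := hδp.continuous
  have cdq : Continuous (deriv q) := hq.continuous_deriv le_rfl
  have cdδq : Continuous (deriv δq) := hδq.continuous_deriv le_rfl
  have cP : Continuous fun z : ℝ × ℝ => p z.2 + z.1 • δp z.2 :=
    (cp.comp continuous_snd).add (continuous_fst.smul (cδp.comp continuous_snd))
  have cQ : Continuous fun z : ℝ × ℝ => q z.2 + z.1 • δq z.2 :=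
    (cq.comp continuous_snd).add (continuous_fst.smul (cδq.comp continuous_snd))
  have cDQ : Continuous fun z : ℝ × ℝ => deriv q z.2 + z.1 • deriv δq z.2 :=
    (cdq.comp continuous_snd).add (continuous_fst.smul (cdδq.comp continuous_snd))
  have cpair : Continuous fun z : ℝ × ℝ =>
      ((q z.2 + z.1 • δq z.2, p z.2 + z.1 • δp z.2) : (Fin n → ℝ) × (Fin n → ℝ)) :=
    cQ.prodMk cP
  have hFc : Continuous fun z : ℝ × ℝ => F z.1 z.2 := by
    apply Continuous.sub
    · exact continuous_finset_sum _ fun i _ =>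
        ((continuous_apply i).comp cP).mul ((continuous_apply i).comp cDQ)
    · exact hH.continuous.comp cpair
  have hF'c : Continuous fun z : ℝ × ℝ => F' z.1 z.2 := by
    apply Continuous.sub
    · apply Continuous.add
      · exact continuous_finset_sum _ fun i _ =>
          ((continuous_apply i).comp (cδp.comp continuous_snd)).mul
            ((continuous_apply i).comp cDQ)
      · exact continuous_finset_sum _ fun i _ =>
          ((continuous_apply i).comp cP).mul
            ((continuous_apply i).comp (cdδq.comp continuous_snd))
    · exact ((hH.continuous_fderiv one_ne_zero).comp cpair).clm_apply
        ((cδq.comp continuous_snd).prodMk (cδp.comp continuous_snd))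
  have hFd : ∀ ε t, HasDerivAt (fun e => F e t) (F' ε t) ε := by
    intro ε t
    have hsum : HasDerivAt
        (fun e => ∑ i, (p t + e • δp t) i * (deriv q t + e • deriv δq t) i)
        (∑ i, (δp t i * (deriv q t + ε • deriv δq t) i
          + (p t + ε • δp t) i * deriv δq t i)) ε := by
      apply HasDerivAt.fun_sum
      intro i _
      have h1 : HasDerivAt (fun e : ℝ => (p t + e • δp t) i) (δp t i) ε := by
        simpa [Pi.add_apply, Pi.smul_apply, smul_eq_mul] using
          ((hasDerivAt_mul_const (δp t i)).const_add (p t i))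
      have h2 : HasDerivAt (fun e : ℝ => (deriv q t + e • deriv δq t) i)
          (deriv δq t i) ε := by
        simpa [Pi.add_apply, Pi.smul_apply, smul_eq_mul] using
          ((hasDerivAt_mul_const (deriv δq t i)).const_add (deriv q t i))
      simpa using h1.fun_mul h2
    have hz : HasDerivAt (fun e : ℝ =>
        ((q t + e • δq t, p t + e • δp t) : (Fin n → ℝ) × (Fin n → ℝ)))
        (δq t, δp t) ε := by
      apply HasDerivAt.prodMk
      · simpa using ((hasDerivAt_id ε).smul_const (δq t)).const_add (q t)
      · simpa using ((hasDerivAt_id ε).smul_const (δp t)).const_add (p t)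
    have hHd : HasDerivAt (fun e => H (q t + e • δq t) (p t + e • δp t))
        (fderiv ℝ G (q t + ε • δq t, p t + ε • δp t) (δq t, δp t)) ε :=
      ((hH.differentiable one_ne_zero _).hasFDerivAt).comp_hasDerivAt ε hz
    have := hsum.fun_sub hHd
    simpa [hF'def, hFdef, Finset.sum_add_distrib] using this
  have hFeq : (fun ε : ℝ =>
        ∫ t in (0 : ℝ)..T,
          ((∑ i, (p t + ε • δp t) i * deriv (fun s => q s + ε • δq s) t i)
            - H (q t + ε • δq t) (p t + ε • δp t)))
      = fun ε => ∫ t in (0:ℝ)..T, F ε t := by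
    funext ε
    congr 1
    funext t
    have : deriv (fun s => q s + ε • δq s) t = deriv q t + ε • deriv δq t :=
      ((hq.differentiable one_ne_zero t).hasDerivAt.add
        ((hδq.differentiable one_ne_zero t).hasDerivAt.const_smul ε)).deriv
    rw [this]
  have hDI := deriv_param_integral (T := T) hFc hF'c hFd
  rw [hFeq] at hstat1
  have h0 : ∫ t in (0:ℝ)..T, F' 0 t = 0 := by rw [← hDI.deriv, hstat1]
  rw [← h0]
  congr 1
  funext t
  simp [hF'def]

end helpers

theorem hamilton_dAlembert_constrained
    (n : ℕ) (T : ℝ) (hT : 0 < T)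
    (Δ : Submodule ℝ (Fin n → ℝ))
    (H : (Fin n → ℝ) → (Fin n → ℝ) → ℝ)
    (hH : ContDiff ℝ 1 (fun x : (Fin n → ℝ) × (Fin n → ℝ) => H x.1 x.2))
    (q p : ℝ → (Fin n → ℝ)) (hq : ContDiff ℝ 1 q) (hp : ContDiff ℝ 1 p)
    (q₀ : Fin n → ℝ) (hq0 : q 0 = q₀)
    (hconstr : ∀ t : ℝ, deriv q t ∈ Δ)
    (hstat : ∀ δq δp : ℝ → (Fin n → ℝ), ContDiff ℝ 1 δq → ContDiff ℝ 1 δp →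
      (∀ t : ℝ, δq t ∈ Δ) → δq 0 = 0 →
      deriv (fun ε : ℝ =>
        ∫ t in (0 : ℝ)..T,
          ((∑ i, (p t + ε • δp t) i * deriv (fun s => q s + ε • δq s) t i)
            - H (q t + ε • δq t) (p t + ε • δp t))) 0 = 0) :
    (∀ t ∈ Ioo (0 : ℝ) T,
      deriv q t = (fun i => fderiv ℝ (fun p' => H (q t) p') (p t) (Pi.single i 1)) ∧
      deriv q t ∈ Δ ∧
      (fun i => deriv p t i + fderiv ℝ (fun q' => H q' (p t)) (q t) (Pi.single i 1))
        ∈ annihilatorOf n Δ) ∧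
    p T ∈ annihilatorOf n Δ := by
  have master : ∀ δq δp : ℝ → (Fin n → ℝ), ContDiff ℝ 1 δq → ContDiff ℝ 1 δp →
      (∀ t : ℝ, δq t ∈ Δ) → δq 0 = 0 →
      ∫ t in (0:ℝ)..T, ((∑ i, δp t i * deriv q t i) + (∑ i, p t i * deriv δq t i)
        - fderiv ℝ (fun x : (Fin n → ℝ) × (Fin n → ℝ) => H x.1 x.2) (q t, p t) (δq t, δp t))
        = 0 :=
    fun δq δp hδq hδp hmem h0 =>
      master_identity H hH q p hq hp δq δp hδq hδp (hstat δq δp hδq hδp hmem h0)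
  -- Specialization 1: q̇ = ∂H/∂p
  have spec1 : ∀ i : Fin n, ∀ t ∈ Ioo (0:ℝ) T,
      deriv q t i = fderiv ℝ (fun x : (Fin n → ℝ) × (Fin n → ℝ) => H x.1 x.2)
        (q t, p t) (0, Pi.single i 1) := by
    intro i
    have hAc : Continuous fun t => fderiv ℝ
        (fun x : (Fin n → ℝ) × (Fin n → ℝ) => H x.1 x.2) (q t, p t) (0, Pi.single i 1) :=
      ((hH.continuous_fderiv one_ne_zero).comp (hq.continuous.prodMk hp.continuous)).clm_apply
        continuous_const
    have hcont : Continuous fun t => deriv q t i -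
        fderiv ℝ (fun x : (Fin n → ℝ) × (Fin n → ℝ) => H x.1 x.2)
          (q t, p t) (0, Pi.single i 1) :=
      ((continuous_apply i).comp (hq.continuous_deriv le_rfl)).sub hAc
    have hz := fund_lemma hT hcont ?hyp
    · intro t ht
      have := hz t ht
      linarith [this]
    case hyp =>
      intro φ hφ _ _
      have hm := master (fun _ => (0 : Fin n → ℝ)) (fun t => φ t • (Pi.single i 1 : Fin n → ℝ))
        contDiff_const (hφ.smul contDiff_const) (fun _ => Δ.zero_mem) rfl
      rw [← hm]
      congr 1
      funext t
      have e1 : ∑ i', (φ t • (Pi.single i 1 : Fin n → ℝ)) i' * deriv q t i'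
          = φ t * deriv q t i := by
        simp [Pi.smul_apply, smul_eq_mul, Pi.single_apply, ite_mul, mul_ite,
          Finset.sum_ite_eq]
      have e2 : deriv (fun _ : ℝ => (0 : Fin n → ℝ)) t = 0 := deriv_const _ _
      have e3 : (((fun _ : ℝ => (0:Fin n → ℝ)) t : Fin n → ℝ), φ t • (Pi.single i 1 : Fin n → ℝ))
          = φ t • ((((0 : Fin n → ℝ), (Pi.single i 1 : Fin n → ℝ)))
            : (Fin n → ℝ) × (Fin n → ℝ)) := by
        rw [Prod.smul_mk, smul_zero]
      rw [e1, e2, e3, _root_.map_smul]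
      simp [smul_eq_mul, mul_sub]
  -- Specialization 2
  have spec2 : ∀ v ∈ Δ,
      (∀ t ∈ Ioo (0:ℝ) T, (∑ i, deriv p t i * v i)
        + fderiv ℝ (fun x : (Fin n → ℝ) × (Fin n → ℝ) => H x.1 x.2) (q t, p t) (v, 0) = 0)
      ∧ (∑ i, p T i * v i) = 0 := by
    intro v hv
    set P : ℝ → ℝ := fun t => ∑ i, p t i * v i with hP
    set P' : ℝ → ℝ := fun t => ∑ i, deriv p t i * v i with hP'
    set A : ℝ → ℝ := fun t =>
      fderiv ℝ (fun x : (Fin n → ℝ) × (Fin n → ℝ) => H x.1 x.2) (q t, p t) (v, 0) with hA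
    have cP : Continuous P := continuous_finset_sum _ fun i _ =>
      ((continuous_apply i).comp hp.continuous).mul continuous_const
    have cP' : Continuous P' := continuous_finset_sum _ fun i _ =>
      ((continuous_apply i).comp (hp.continuous_deriv le_rfl)).mul continuous_const
    have cA : Continuous A :=
      ((hH.continuous_fderiv one_ne_zero).comp (hq.continuous.prodMk hp.continuous)).clm_apply
        continuous_const
    have hPd : ∀ t, HasDerivAt P (P' t) t := fun t => HasDerivAt.fun_sum fun i _ =>
      (hasDerivAt_pi.1 (hp.differentiable one_ne_zero t).hasDerivAt i).mul_const (v i)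
    have key : ∀ φ : ℝ → ℝ, ContDiff ℝ 1 φ → φ 0 = 0 →
        φ T * P T = ∫ t in (0:ℝ)..T, φ t * (P' t + A t) := by
      intro φ hφ h0
      have hm := master (fun t => φ t • v) (fun _ => (0 : Fin n → ℝ))
        (hφ.smul contDiff_const) contDiff_const (fun t => Δ.smul_mem _ hv) (by simp [h0])
      have hm' : ∫ t in (0:ℝ)..T, (deriv φ t * P t - φ t * A t) = 0 := by
        rw [← hm]
        congr 1
        funext t
        have e2 : deriv (fun s => φ s • v) t = deriv φ t • v :=
          ((hφ.differentiable one_ne_zero t).hasDerivAt.smul_const v).deriv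
        have e3 : ((φ t • v : Fin n → ℝ), ((fun _ : ℝ => (0:Fin n → ℝ)) t : Fin n → ℝ))
            = φ t • (((v : Fin n → ℝ), (0 : Fin n → ℝ)) : (Fin n → ℝ) × (Fin n → ℝ)) := by
          simp [Prod.smul_mk]
        rw [e2, e3, _root_.map_smul]
        simp only [hP, hA, Pi.zero_apply, zero_mul, Finset.sum_const_zero, zero_add,
          smul_eq_mul, Pi.smul_apply, Finset.mul_sum]
        congr 1
        exact Finset.sum_congr rfl fun j _ => by ring
      have hcont1 : Continuous fun t => deriv φ t * P t + φ t * P' t :=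
        ((hφ.continuous_deriv le_rfl).mul cP).add (hφ.continuous.mul cP')
      have hcont2 : Continuous fun t => deriv φ t * P t - φ t * A t :=
        ((hφ.continuous_deriv le_rfl).mul cP).sub (hφ.continuous.mul cA)
      have hibp : ∫ t in (0:ℝ)..T, (deriv φ t * P t + φ t * P' t)
          = φ T * P T - φ 0 * P 0 :=
        intervalIntegral.integral_eq_sub_of_hasDerivAt
          (fun t _ => (hφ.differentiable one_ne_zero t).hasDerivAt.mul (hPd t))
          (hcont1.intervalIntegrable 0 T)
      rw [h0, zero_mul, sub_zero] at hibp
      have hsub := intervalIntegral.integral_sub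
        (hcont1.intervalIntegrable (μ := volume) 0 T)
        (hcont2.intervalIntegrable (μ := volume) 0 T)
      rw [hibp, hm', sub_zero] at hsub
      rw [← hsub]
      congr 1
      funext t
      ring
    have hzero : ∀ t ∈ Ioo (0:ℝ) T, P' t + A t = 0 :=
      fund_lemma hT (cP'.add cA) (fun φ hφ h0 hTT => by
        have := key φ hφ h0
        rw [hTT, zero_mul] at this
        exact this.symm)
    constructor
    · exact hzero
    · have hkey := key (fun t => t) contDiff_id rfl
      have hzz : ∫ t in (0:ℝ)..T, (fun s : ℝ => s) t * (P' t + A t) = 0 := by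
        rw [intervalIntegral.integral_congr (g := fun _ => (0:ℝ))]
        · simp
        · intro t ht
          rw [uIcc_of_le hT.le] at ht
          have heo : EqOn (fun s => P' s + A s) (fun _ => (0:ℝ)) (Ioo (0:ℝ) T) :=
            fun s hs => hzero s hs
          have hcl : EqOn (fun s => P' s + A s) (fun _ => (0:ℝ)) (closure (Ioo (0:ℝ) T)) :=
            heo.closure (cP'.add cA) continuous_const
          rw [closure_Ioo hT.ne] at hcl
          have h4 : P' t + A t = 0 := hcl ht
          simp [h4]
      rw [hzz] at hkey
      have := mul_eq_zero.1 hkey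
      rcases this with h | h
      · exact absurd h hT.ne'
      · exact h
  refine ⟨fun t ht => ⟨?_, hconstr t, ?_⟩, ?_⟩
  · funext i
    rw [partial_p hH]
    exact spec1 i t ht
  · intro v hv
    have h1 := (spec2 v hv).1 t ht
    have e : ∀ i : Fin n, fderiv ℝ (fun q' => H q' (p t)) (q t) (Pi.single i 1)
        = fderiv ℝ (fun x : (Fin n → ℝ) × (Fin n → ℝ) => H x.1 x.2)
            (q t, p t) (Pi.single i 1, 0) := fun i => partial_q hH _ _ _
    calc ∑ i, (deriv p t i + fderiv ℝ (fun q' => H q' (p t)) (q t) (Pi.single i 1)) * v i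
        = (∑ i, deriv p t i * v i) + ∑ i,
            fderiv ℝ (fun x : (Fin n → ℝ) × (Fin n → ℝ) => H x.1 x.2)
              (q t, p t) (Pi.single i 1, 0) * v i := by
          rw [← Finset.sum_add_distrib]
          refine Finset.sum_congr rfl fun i _ => ?_
          rw [e i, add_mul]
      _ = (∑ i, deriv p t i * v i) + fderiv ℝ
            (fun x : (Fin n → ℝ) × (Fin n → ℝ) => H x.1 x.2) (q t, p t) (v, 0) := by
          rw [clm_sum_single]
      _ = 0 := h1
  · intro v hv
    exact (spec2 v hv).2
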